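/- arXiv:2306.07360 — 9 statements merged into one kernel-verified Lean document; each statement's English description precedes it below -/
import Mathlib

section
/- Let L be a complete modular lattice and let ε : L → L be a linear morphism with kernel ker_ε such that ε ∘ ε = ε. Then ε coincides with the projection onto ε(⊤) along ker_ε; explicitly, ε(a) = (a ⊔ ker_ε) ⊓ ε(⊤) for all a ∈ L. -/
section Preamble

variable {α β : Type*}

/-- A linear morphism between complete lattices: there is a kernel element `k` such that
`φ x = φ (x ⊔ k)` for all `x`, and `φ` restricts to an isomorphism of (complete) lattices
from the interval `[k, ⊤]` onto `[⊥, φ ⊤]`. -/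
def IsLinMor [CompleteLattice α] [CompleteLattice β] (φ : α → β) : Prop :=
  ∃ k : α, (∀ x, φ x = φ (x ⊔ k)) ∧
    ∃ e : Set.Icc k (⊤ : α) ≃o Set.Icc (⊥ : β) (φ ⊤),
      ∀ x : Set.Icc k (⊤ : α), (e x : β) = φ (x : α)

/-- The kernel of a linear morphism: the largest element sent to `⊥`. -/
noncomputable def linKer [CompleteLattice α] [CompleteLattice β] (φ : α → β) : α :=
  sSup {a | φ a = ⊥}

/-- A submonoid with zero of the monoid of linear endomorphisms of `α`. -/
structure IsLinSubmonoid [CompleteLattice α] (M : Set (α → α)) : Prop where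
  lin_mem : ∀ φ ∈ M, IsLinMor φ
  id_mem : (id : α → α) ∈ M
  zero_mem : (fun _ : α => (⊥ : α)) ∈ M
  comp_mem : ∀ φ ∈ M, ∀ ψ ∈ M, φ ∘ ψ ∈ M

/-- The projection onto `x` along a complement `x'`. -/
def proj [CompleteLattice α] (x x' : α) : α → α := fun a => (a ⊔ x') ⊓ x

/-- `M` is closed under complements: whenever `φ ∈ M` restricts to a linear isomorphism
`[⊥, x] → [⊥, y]` with `x, y` complemented, the composite `ι_x ∘ (φ|_x)⁻¹ ∘ π_y` is in `M`. -/
def ClosedUnderComplements [CompleteLattice α] (M : Set (α → α)) : Prop :=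
  ∀ φ ∈ M, ∀ x x' y y' : α, IsCompl x x' → IsCompl y y' →
    ∀ e : Set.Icc (⊥ : α) x ≃o Set.Icc (⊥ : α) y,
      (∀ a : Set.Icc (⊥ : α) x, ((e a : Set.Icc (⊥ : α) y) : α) = φ (a : α)) →
      (fun a : α =>
        ((e.symm ⟨(a ⊔ y') ⊓ y, bot_le, inf_le_right⟩ : Set.Icc (⊥ : α) x) : α)) ∈ M

/-- `L` is `M`-endoregular: `M` is a regular monoid. -/
def MEndoregular [CompleteLattice α] (M : Set (α → α)) : Prop :=
  ∀ φ ∈ M, ∃ ψ ∈ M, φ ∘ ψ ∘ φ = φ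

/-- `L` is `M`-Rickart: kernels of members of `M` have complements. -/
def MRickart [CompleteLattice α] (M : Set (α → α)) : Prop :=
  ∀ φ ∈ M, ∃ y, IsCompl (linKer φ) y

/-- `L` is dual-`M`-Rickart: images of members of `M` have complements. -/
def MDualRickart [CompleteLattice α] (M : Set (α → α)) : Prop :=
  ∀ φ ∈ M, ∃ y, IsCompl (φ ⊤) y

/-- The `M`-C2 condition. -/
def MC2 [CompleteLattice α] (M : Set (α → α)) : Prop :=
  ∀ a x x' : α, IsCompl x x' →
    ∀ e : Set.Icc (⊥ : α) x ≃o Set.Icc (⊥ : α) a,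
      ((fun b : α =>
          ((e ⟨(b ⊔ x') ⊓ x, bot_le, inf_le_right⟩ : Set.Icc (⊥ : α) a) : α)) ∈ M) →
      ∃ a', IsCompl a a'

/-- The `M`-D2 condition. -/
def MD2 [CompleteLattice α] (M : Set (α → α)) : Prop :=
  ∀ a x : α, (∃ x', IsCompl x x') →
    ∀ e : Set.Icc a (⊤ : α) ≃o Set.Icc (⊥ : α) x,
      ((fun b : α => ((e ⟨a ⊔ b, le_sup_left, le_top⟩ : Set.Icc (⊥ : α) x) : α)) ∈ M) →
      ∃ a', IsCompl a a'

/-- `L` is `M`-abelian: every idempotent of `M` is central in `M`. -/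
def MAbelian [CompleteLattice α] (M : Set (α → α)) : Prop :=
  ∀ ε ∈ M, ε ∘ ε = ε → ∀ φ ∈ M, ε ∘ φ = φ ∘ ε

/-- `a` is `M`-`L`-generated: it is a join of images of linear morphisms `L → [⊥, a]`
whose composites with the inclusion `ι_a` lie in `M`. -/
def MGenerated [CompleteLattice α] (M : Set (α → α)) (a : α) : Prop :=
  ∃ S : Set (α → α), S ⊆ M ∧ (∀ f ∈ S, ∀ x, f x ≤ a) ∧ (⨆ f ∈ S, f ⊤) = a

/-- A complete lattice is compact if every join representation of `⊤` has a finite subjoin. -/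
def CompactLat (α : Type*) [CompleteLattice α] : Prop :=
  ∀ s : Set α, sSup s = ⊤ → ∃ t : Finset α, ↑t ⊆ s ∧ sSup (↑t : Set α) = ⊤

/-- An element `c` is compact if the interval `[⊥, c]` is a compact lattice. -/
def CompactElt [CompleteLattice α] (c : α) : Prop :=
  ∀ s : Set α, (∀ a ∈ s, a ≤ c) → sSup s = c →
    ∃ t : Finset α, ↑t ⊆ s ∧ sSup (↑t : Set α) = c

/-- `x` is essential in `L`. -/
def Essential [CompleteLattice α] (x : α) : Prop := ∀ y, x ⊓ y = ⊥ → y = ⊥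

/-- `x` is essential in the interval `[⊥, c]`. -/
def EssentialIn [CompleteLattice α] (x c : α) : Prop :=
  x ≤ c ∧ ∀ y ≤ c, x ⊓ y = ⊥ → y = ⊥

/-- `x` is superfluous in `L`. -/
def Superfluous [CompleteLattice α] (x : α) : Prop := ∀ y, x ⊔ y = ⊤ → y = ⊤

/-- `x` is superfluous in the interval `[⊥, c]`. -/
def SuperfluousIn [CompleteLattice α] (x c : α) : Prop :=
  x ≤ c ∧ ∀ y ≤ c, x ⊔ y = c → y = c

/-- `M` contains all the projections. -/
def ContainsProjections [CompleteLattice α] (M : Set (α → α)) : Prop :=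
  ∀ x x' : α, IsCompl x x' → proj x x' ∈ M

/-- `L` is `M`-K-extending. -/
def MKExtending [CompleteLattice α] (M : Set (α → α)) : Prop :=
  ∀ φ ∈ M, ∃ c : α, (∃ c', IsCompl c c') ∧ EssentialIn (linKer φ) c

/-- `L` is `M`-K-nonsingular. -/
def MKNonsingular [CompleteLattice α] (M : Set (α → α)) : Prop :=
  ∀ φ ∈ M, Essential (linKer φ) → φ = fun _ => (⊥ : α)

/-- `L` is `M`-T-lifting. -/
def MTLifting [CompleteLattice α] (M : Set (α → α)) : Prop :=
  ∀ φ ∈ M, ∃ c c' : α, IsCompl c c' ∧ c ≤ φ ⊤ ∧ SuperfluousIn (φ ⊤ ⊓ c') c'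

end Preamble

/-- An idempotent linear endomorphism `ε` of a complete modular lattice equals
the projection onto `ε ⊤` along its kernel: `ε a = (a ⊔ ker_ε) ⊓ ε ⊤`. -/
theorem stmt_0 {α : Type*} [CompleteLattice α] [IsModularLattice α]
    (ε : α → α) (k : α)
    (h1 : ∀ x, ε x = ε (x ⊔ k))
    (h2 : ∃ e : Set.Icc k (⊤ : α) ≃o Set.Icc (⊥ : α) (ε ⊤),
      ∀ x : Set.Icc k (⊤ : α), (e x : α) = ε (x : α))
    (hidem : ε ∘ ε = ε) :
    ∀ a : α, ε a = (a ⊔ k) ⊓ ε ⊤ := by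
  obtain ⟨e, he⟩ := h2
  intro a
  have key : ∀ x : α, ε x = (e ⟨x ⊔ k, le_sup_right, le_top⟩ : α) := by
    intro x; rw [he, h1]
  have hle : ε a ≤ ε ⊤ := by
    rw [key]; exact (e ⟨a ⊔ k, le_sup_right, le_top⟩).2.2
  have hidem' : ∀ x, ε (ε x) = ε x := fun x => congrFun hidem x
  have hinj : (⟨ε a ⊔ k, le_sup_right, le_top⟩ : Set.Icc k ⊤)
      = ⟨a ⊔ k, le_sup_right, le_top⟩ := by
    apply e.injective
    apply Subtype.ext
    rw [← key, ← key]
    exact hidem' a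
  have heq : ε a ⊔ k = a ⊔ k := congrArg Subtype.val hinj
  apply le_antisymm
  · exact le_inf (le_trans le_sup_left heq.le) hle
  · obtain ⟨c, hc⟩ := e.surjective ⟨(a ⊔ k) ⊓ ε ⊤, bot_le, inf_le_right⟩
    have hrc : (a ⊔ k) ⊓ ε ⊤ = ε c := by
      have := he c
      rw [hc] at this
      exact this
    have hεr : ε ((a ⊔ k) ⊓ ε ⊤) = (a ⊔ k) ⊓ ε ⊤ := by
      rw [hrc]; exact hidem' c
    calc (a ⊔ k) ⊓ ε ⊤ = ε ((a ⊔ k) ⊓ ε ⊤) := hεr.symm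
      _ = (e ⟨(a ⊔ k) ⊓ ε ⊤ ⊔ k, le_sup_right, le_top⟩ : α) := key _
      _ ≤ (e ⟨a ⊔ k, le_sup_right, le_top⟩ : α) :=
        e.monotone (Subtype.mk_le_mk.mpr (sup_le inf_le_left le_sup_right))
      _ = ε a := (key a).symm
end

section
/- Let L be a complete modular lattice and 𝔪 a submonoid with zero of End_lin(L) that is closed under complements. For φ ∈ 𝔪 the following are equivalent: (a) ker_φ and φ(⊤) both have complements in L; (b) there exists ψ ∈ 𝔪 such that φ ∘ ψ ∘ φ = φ. Moreover, in that case (ψ∘φ)(⊤) is a complement of ker_φ and ker_{φ∘ψ} is a complement of φ(⊤). -/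
section MyHelpers

variable {α : Type*} [CompleteLattice α]

private structure LinMorFacts (φ : α → α) : Prop where
  spec : ∀ a, φ a = ⊥ ↔ a ≤ linKer φ
  mono : Monotone φ
  surj : ∀ b, b ≤ φ ⊤ → ∃ x, φ x = b
  inj : ∀ x y, linKer φ ≤ x → linKer φ ≤ y → φ x = φ y → x = y
  ker_eq : ∀ x, φ x = φ (x ⊔ linKer φ)

private lemma linker_eq_aux {φ : α → α} (k : α) (hk : ∀ x, φ x = φ (x ⊔ k))
    (e : Set.Icc k (⊤ : α) ≃o Set.Icc (⊥ : α) (φ ⊤))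
    (he : ∀ x : Set.Icc k (⊤ : α), (e x : α) = φ (x : α)) :
    linKer φ = k ∧ (∀ a, φ a = ⊥ ↔ a ≤ k) := by
  have hbot : φ k = ⊥ := by
    have h1 : e ⟨k, le_rfl, le_top⟩ ≤ e (e.symm ⟨⊥, le_rfl, bot_le⟩) :=
      e.monotone (e.symm ⟨⊥, le_rfl, bot_le⟩).2.1
    rw [e.apply_symm_apply] at h1
    have h3 : (e ⟨k, le_rfl, le_top⟩ : α) ≤ ⊥ := h1
    have h2 := he ⟨k, le_rfl, le_top⟩
    rw [le_antisymm h3 (e ⟨k, le_rfl, le_top⟩).2.1] at h2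
    exact h2.symm
  have inj : ∀ x y, k ≤ x → k ≤ y → φ x = φ y → x = y := by
    intro x y hx hy hxy
    have h2 : e ⟨x, hx, le_top⟩ = e ⟨y, hy, le_top⟩ := by
      apply Subtype.ext; rw [he, he]; exact hxy
    exact congrArg Subtype.val (e.injective h2)
  have spec : ∀ a, φ a = ⊥ ↔ a ≤ k := by
    intro a
    constructor
    · intro ha
      have h1 : φ (a ⊔ k) = φ k := by rw [← hk a, ha, hbot]
      exact le_of_sup_eq (inj _ _ le_sup_right le_rfl h1)
    · intro ha
      rw [hk a, sup_eq_right.2 ha, hbot]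
  exact ⟨le_antisymm (sSup_le fun a ha => (spec a).1 ha) (le_sSup ((spec k).2 le_rfl)), spec⟩

private lemma linmor_facts {φ : α → α} (h : IsLinMor φ) : LinMorFacts φ := by
  obtain ⟨k, hk, e, he⟩ := h
  obtain ⟨hker, spec⟩ := linker_eq_aux k hk e he
  have inj : ∀ x y, k ≤ x → k ≤ y → φ x = φ y → x = y := by
    intro x y hx hy hxy
    have h2 : e ⟨x, hx, le_top⟩ = e ⟨y, hy, le_top⟩ := by
      apply Subtype.ext; rw [he, he]; exact hxy
    exact congrArg Subtype.val (e.injective h2)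
  have mono : Monotone φ := by
    intro x y hxy
    rw [hk x, hk y]
    have : (e ⟨x ⊔ k, le_sup_right, le_top⟩ : α) ≤ (e ⟨y ⊔ k, le_sup_right, le_top⟩ : α) :=
      e.monotone (Subtype.mk_le_mk.2 (sup_le_sup_right hxy k))
    rwa [he, he] at this
  refine ⟨by rw [hker]; exact spec, mono, ?_, by rw [hker]; exact inj,
    by rw [hker]; exact hk⟩
  intro b hb
  refine ⟨(e.symm ⟨b, bot_le, hb⟩ : α), ?_⟩
  have h1 := he (e.symm ⟨b, bot_le, hb⟩)
  rw [e.apply_symm_apply] at h1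
  exact h1.symm

private lemma linmor_bot {φ : α → α} (f : LinMorFacts φ) : φ ⊥ = ⊥ :=
  (f.spec ⊥).2 bot_le

/-- Idempotent linear endomorphisms split the lattice. -/
private lemma idem_isCompl {ε : α → α} (h : IsLinMor ε) (hi : ∀ a, ε (ε a) = ε a) :
    IsCompl (linKer ε) (ε ⊤) := by
  have f := linmor_facts h
  constructor
  · rw [disjoint_iff]
    set a := linKer ε ⊓ ε ⊤ with ha
    obtain ⟨x, hx⟩ := f.surj a inf_le_right
    have h1 : ε a = a := by rw [← hx, hi]
    have h2 : ε a = ⊥ := (f.spec a).2 inf_le_left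
    rw [← h1, h2]
  · rw [codisjoint_iff]
    apply f.inj _ _ le_sup_left le_top
    calc ε (linKer ε ⊔ ε ⊤) = ε (ε ⊤ ⊔ linKer ε) := by rw [sup_comm]
      _ = ε (ε ⊤) := (f.ker_eq (ε ⊤)).symm
      _ = ε ⊤ := hi ⊤

/-- Restriction of a linear morphism to a complement of its kernel. -/
private lemma linmor_restrict [IsModularLattice α] {φ : α → α} (h : IsLinMor φ) {k' : α}
    (hc : IsCompl (linKer φ) k') :
    ∃ e' : Set.Icc (⊥ : α) k' ≃o Set.Icc (⊥ : α) (φ ⊤),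
      ∀ a : Set.Icc (⊥ : α) k', (e' a : α) = φ (a : α) := by
  obtain ⟨k, hk, e, he⟩ := h
  obtain ⟨hker, -⟩ := linker_eq_aux k hk e he
  rw [hker] at hc
  have hinf : k ⊓ k' = ⊥ := hc.inf_eq_bot
  have hsup : k' ⊔ k = ⊤ := sup_comm k' k ▸ hc.sup_eq_top
  have left : ∀ b : α, b ≤ k' → (b ⊔ k) ⊓ k' = b := fun b hb => by
    rw [sup_inf_assoc_of_le k hb, hinf, sup_bot_eq]
  have right : ∀ a : α, k ≤ a → a ⊓ k' ⊔ k = a := fun a haa => by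
    rw [inf_sup_assoc_of_le k' haa, hsup, inf_top_eq]
  let m : Set.Icc (⊥ : α) k' ≃o Set.Icc k (⊤ : α) :=
    { toFun := fun b => ⟨(b : α) ⊔ k, le_sup_right, le_top⟩
      invFun := fun a => ⟨(a : α) ⊓ k', bot_le, inf_le_right⟩
      left_inv := fun b => Subtype.ext (left b b.2.2)
      right_inv := fun a => Subtype.ext (right a a.2.1)
      map_rel_iff' := by
        intro b₁ b₂
        rw [← Subtype.coe_le_coe, ← Subtype.coe_le_coe]
        show (b₁ : α) ⊔ k ≤ (b₂ : α) ⊔ k ↔ (b₁ : α) ≤ (b₂ : α)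
        constructor
        · intro hle
          have := inf_le_inf_right k' hle
          rwa [left b₁ b₁.2.2, left b₂ b₂.2.2] at this
        · exact fun hle => sup_le_sup_right hle k }
  refine ⟨m.trans e, fun a => ?_⟩
  have : (e (m a) : α) = φ ((a : α) ⊔ k) := he (m a)
  rw [← hk a] at this
  exact this

end MyHelpers

/-- For `φ` in a submonoid with zero `M ⊆ End_lin(L)` closed under complements:
`ker_φ` and `φ ⊤` are complemented iff there is `ψ ∈ M` with `φ ∘ ψ ∘ φ = φ`; moreover, in that
case `(ψ ∘ φ) ⊤` is a complement of `ker_φ` and `ker_{φ ∘ ψ}` is a complement of `φ ⊤`. -/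
theorem stmt_1 {α : Type*} [CompleteLattice α] [IsModularLattice α]
    (M : Set (α → α)) (hM : IsLinSubmonoid M) (hcc : ClosedUnderComplements M)
    (φ : α → α) (hφ : φ ∈ M) :
    (((∃ k', IsCompl (linKer φ) k') ∧ (∃ i', IsCompl (φ ⊤) i')) ↔
      ∃ ψ ∈ M, φ ∘ ψ ∘ φ = φ) ∧
    (∀ ψ ∈ M, φ ∘ ψ ∘ φ = φ →
      IsCompl (linKer φ) ((ψ ∘ φ) ⊤) ∧ IsCompl (φ ⊤) (linKer (φ ∘ ψ))) := by
  have fφ := linmor_facts (hM.lin_mem φ hφ)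
  -- direction (b) + moreover
  have main : ∀ ψ ∈ M, φ ∘ ψ ∘ φ = φ →
      IsCompl (linKer φ) ((ψ ∘ φ) ⊤) ∧ IsCompl (φ ⊤) (linKer (φ ∘ ψ)) := by
    intro ψ hψ hcomp
    have fψ := linmor_facts (hM.lin_mem ψ hψ)
    have hpt : ∀ a, φ (ψ (φ a)) = φ a := fun a => congrFun hcomp a
    have hε : (ψ ∘ φ) ∈ M := hM.comp_mem ψ hψ φ hφ
    have hε' : (φ ∘ ψ) ∈ M := hM.comp_mem φ hφ ψ hψ
    have hidem : ∀ a, (ψ ∘ φ) ((ψ ∘ φ) a) = (ψ ∘ φ) a := fun a => by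
      simp only [Function.comp_apply]; rw [hpt a]
    have hidem' : ∀ a, (φ ∘ ψ) ((φ ∘ ψ) a) = (φ ∘ ψ) a := fun a => by
      simp only [Function.comp_apply]; rw [hpt (ψ a)]
    have c1 := idem_isCompl (hM.lin_mem _ hε) hidem
    have c2 := idem_isCompl (hM.lin_mem _ hε') hidem'
    have hker1 : linKer (ψ ∘ φ) = linKer φ := by
      unfold linKer
      congr 1
      ext a
      simp only [Set.mem_setOf_eq, Function.comp_apply]
      constructor
      · intro hb
        rw [← hpt a, hb, linmor_bot fφ]
      · intro hb
        rw [hb, linmor_bot fψ]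
    have htop : (φ ∘ ψ) ⊤ = φ ⊤ := by
      apply le_antisymm (fφ.mono le_top)
      calc φ ⊤ = φ (ψ (φ ⊤)) := (hpt ⊤).symm
        _ ≤ φ (ψ ⊤) := fφ.mono (fψ.mono le_top)
    constructor
    · rw [← hker1]; exact c1
    · rw [← htop]; exact c2.symm
  refine ⟨⟨?_, fun ⟨ψ, hψ, hcomp⟩ => ⟨⟨_, (main ψ hψ hcomp).1⟩, ⟨_, (main ψ hψ hcomp).2⟩⟩⟩,
    main⟩
  rintro ⟨⟨k', hk'⟩, ⟨i', hi'⟩⟩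
  obtain ⟨e', he'⟩ := linmor_restrict (hM.lin_mem φ hφ) hk'
  have hmem := hcc φ hφ k' (linKer φ) (φ ⊤) i' hk'.symm hi' e' he'
  refine ⟨_, hmem, ?_⟩
  funext a
  simp only [Function.comp_apply]
  have h1 : (φ a ⊔ i') ⊓ φ ⊤ = φ a := by
    rw [sup_inf_assoc_of_le i' (fφ.mono le_top), hi'.symm.inf_eq_bot, sup_bot_eq]
  have h2 : (⟨(φ a ⊔ i') ⊓ φ ⊤, bot_le, inf_le_right⟩ : Set.Icc (⊥ : α) (φ ⊤)) =
      ⟨φ a, bot_le, fφ.mono le_top⟩ := Subtype.ext h1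
  rw [h2, ← he' (e'.symm ⟨φ a, bot_le, fφ.mono le_top⟩), e'.apply_symm_apply]
end

section
/- Let L be a complete modular lattice and 𝔪 a submonoid with zero of End_lin(L) that is closed under complements. Then L is 𝔪-endoregular if and only if L is both 𝔪-Rickart and dual-𝔪-Rickart. -/
section AuxStmt4
variable {α : Type*} [CompleteLattice α]

private theorem linmor_props {φ : α → α} (h : IsLinMor φ) :
    (∀ x, φ x = φ (x ⊔ linKer φ)) ∧ φ (linKer φ) = ⊥ ∧ Monotone φ ∧
    (∀ x y, linKer φ ≤ x → linKer φ ≤ y → φ x = φ y → x = y) ∧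
    (∀ b, b ≤ φ ⊤ → ∃ c, linKer φ ≤ c ∧ φ c = b) ∧
    ∃ e : Set.Icc (linKer φ) (⊤ : α) ≃o Set.Icc (⊥ : α) (φ ⊤),
      ∀ x : Set.Icc (linKer φ) (⊤ : α), (e x : α) = φ (x : α) := by
  obtain ⟨k, hk, e, he⟩ := h
  have hbot : φ k = ⊥ := by
    have h1 : (⟨k, le_refl k, le_top⟩ : Set.Icc k (⊤ : α)) ≤ e.symm ⟨⊥, le_refl _, bot_le⟩ :=
      (e.symm ⟨⊥, le_refl _, bot_le⟩).2.1
    have h2 := e.monotone h1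
    rw [e.apply_symm_apply] at h2
    have h3 : (e ⟨k, le_refl k, le_top⟩ : α) ≤ ⊥ := h2
    rw [he ⟨k, le_refl k, le_top⟩] at h3
    exact le_bot_iff.mp h3
  have hinj : ∀ x y : Set.Icc k (⊤ : α), φ x = φ y → x = y := fun x y hxy =>
    e.injective (Subtype.ext (by rw [he x, he y, hxy]))
  have hker : linKer φ = k := by
    apply le_antisymm
    · apply sSup_le
      intro a ha
      have h1 : φ (a ⊔ k) = φ k := by rw [← hk a, ha, hbot]
      have h2 := hinj ⟨a ⊔ k, le_sup_right, le_top⟩ ⟨k, le_refl k, le_top⟩ h1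
      have h3 : a ⊔ k = k := congrArg Subtype.val h2
      exact sup_eq_right.mp h3
    · exact le_sSup hbot
  have hmono : Monotone φ := by
    intro x y hxy
    rw [hk x, hk y]
    have h1 : (⟨x ⊔ k, le_sup_right, le_top⟩ : Set.Icc k (⊤ : α)) ≤
        ⟨y ⊔ k, le_sup_right, le_top⟩ := sup_le_sup_right hxy k
    have h2 := e.monotone h1
    rw [← he ⟨x ⊔ k, le_sup_right, le_top⟩, ← he ⟨y ⊔ k, le_sup_right, le_top⟩]
    exact h2
  have hsurj : ∀ b, b ≤ φ ⊤ → ∃ c, k ≤ c ∧ φ c = b := by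
    intro b hb
    refine ⟨e.symm ⟨b, bot_le, hb⟩, (e.symm ⟨b, bot_le, hb⟩).2.1, ?_⟩
    rw [← he (e.symm ⟨b, bot_le, hb⟩), e.apply_symm_apply]
  rw [hker]
  exact ⟨hk, hbot, hmono,
    fun x y hx hy hxy => congrArg Subtype.val
      (hinj ⟨x, hx, le_top⟩ ⟨y, hy, le_top⟩ hxy), hsurj, e, he⟩

private theorem idem_isCompl_s4 {φ : α → α} (h : IsLinMor φ) (hid : ∀ x, φ (φ x) = φ x) :
    IsCompl (linKer φ) (φ ⊤) := by
  obtain ⟨hsup, hbot, hmono, hinj, hsurj, -⟩ := linmor_props h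
  constructor
  · rw [disjoint_iff]
    obtain ⟨c, hck, hc⟩ := hsurj (linKer φ ⊓ φ ⊤) inf_le_right
    have h1 : φ (linKer φ ⊓ φ ⊤) = linKer φ ⊓ φ ⊤ := by
      conv_lhs => rw [← hc, hid, hc]
    have h2 : φ (linKer φ ⊓ φ ⊤) = ⊥ := by
      rw [hsup (linKer φ ⊓ φ ⊤), sup_eq_right.mpr inf_le_left, hbot]
    rw [← h1, h2]
  · rw [codisjoint_iff]
    have h1 : φ (linKer φ ⊔ φ ⊤) = φ ⊤ := by
      rw [sup_comm, ← hsup (φ ⊤), hid]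
    exact hinj _ _ le_sup_left le_top h1

/-- Order iso `[⊥, c] ≃o [k, ⊤]` from a complement pair, in a modular lattice. -/
private def complIso [IsModularLattice α] {k c : α} (h : IsCompl k c) :
    Set.Icc (⊥ : α) c ≃o Set.Icc k (⊤ : α) where
  toFun a := ⟨(a : α) ⊔ k, le_sup_right, le_top⟩
  invFun y := ⟨(y : α) ⊓ c, bot_le, inf_le_right⟩
  left_inv a := by
    apply Subtype.ext
    show ((a : α) ⊔ k) ⊓ c = (a : α)
    rw [sup_inf_assoc_of_le k a.2.2, h.inf_eq_bot, sup_bot_eq]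
  right_inv y := by
    apply Subtype.ext
    show (y : α) ⊓ c ⊔ k = (y : α)
    rw [inf_sup_assoc_of_le c y.2.1, h.symm.sup_eq_top, inf_top_eq]
  map_rel_iff' := by
    intro a b
    constructor
    · intro hab
      have h1 : ((a : α) ⊔ k) ⊓ c ≤ ((b : α) ⊔ k) ⊓ c := inf_le_inf_right c hab
      rw [sup_inf_assoc_of_le k a.2.2, sup_inf_assoc_of_le k b.2.2, h.inf_eq_bot,
        sup_bot_eq, sup_bot_eq] at h1
      exact h1
    · intro hab
      exact sup_le_sup_right (show (a : α) ≤ (b : α) from hab) k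

end AuxStmt4

/-- `L` is `M`-endoregular iff `L` is `M`-Rickart and dual-`M`-Rickart. -/
theorem stmt_4 {α : Type*} [CompleteLattice α] [IsModularLattice α]
    (M : Set (α → α)) (hM : IsLinSubmonoid M) (hcc : ClosedUnderComplements M) :
    MEndoregular M ↔ MRickart M ∧ MDualRickart M := by
  constructor
  · intro hreg
    constructor
    · -- M-Rickart
      intro φ hφ
      obtain ⟨ψ, hψ, hc⟩ := hreg φ hφ
      have hcpt : ∀ a, φ (ψ (φ a)) = φ a := fun a => congrFun hc a
      obtain ⟨-, -, -, -, -, -⟩ := linmor_props (hM.lin_mem φ hφ)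
      have hφbot : φ ⊥ = ⊥ := by
        obtain ⟨hs, hb, -⟩ := linmor_props (hM.lin_mem φ hφ)
        rw [hs ⊥, bot_sup_eq, hb]
      have hψbot : ψ ⊥ = ⊥ := by
        obtain ⟨hs, hb, -⟩ := linmor_props (hM.lin_mem ψ hψ)
        rw [hs ⊥, bot_sup_eq, hb]
      have hε : ψ ∘ φ ∈ M := hM.comp_mem ψ hψ φ hφ
      have hidem : ∀ x, (ψ ∘ φ) ((ψ ∘ φ) x) = (ψ ∘ φ) x := by
        intro x; show ψ (φ (ψ (φ x))) = ψ (φ x); rw [hcpt x]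
      have hkereq : linKer (ψ ∘ φ) = linKer φ := by
        unfold linKer
        congr 1
        ext a
        simp only [Set.mem_setOf_eq, Function.comp_apply]
        constructor
        · intro h
          have := hcpt a
          rw [h, hφbot] at this
          exact this.symm
        · intro h; rw [h, hψbot]
      refine ⟨(ψ ∘ φ) ⊤, ?_⟩
      rw [← hkereq]
      exact idem_isCompl_s4 (hM.lin_mem _ hε) hidem
    · -- dual M-Rickart
      intro φ hφ
      obtain ⟨ψ, hψ, hc⟩ := hreg φ hφ
      have hcpt : ∀ a, φ (ψ (φ a)) = φ a := fun a => congrFun hc a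
      have hη : φ ∘ ψ ∈ M := hM.comp_mem φ hφ ψ hψ
      have hidem : ∀ x, (φ ∘ ψ) ((φ ∘ ψ) x) = (φ ∘ ψ) x := by
        intro x; show φ (ψ (φ (ψ x))) = φ (ψ x); rw [hcpt (ψ x)]
      obtain ⟨-, -, hmono, -, -, -⟩ := linmor_props (hM.lin_mem _ hη)
      obtain ⟨-, -, hφmono, -, -, -⟩ := linmor_props (hM.lin_mem φ hφ)
      have himeq : (φ ∘ ψ) ⊤ = φ ⊤ := by
        apply le_antisymm
        · exact hφmono le_top
        · calc φ ⊤ = (φ ∘ ψ) (φ ⊤) := (hcpt ⊤).symm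
            _ ≤ (φ ∘ ψ) ⊤ := hmono le_top
      refine ⟨linKer (φ ∘ ψ), ?_⟩
      rw [← himeq]
      exact (idem_isCompl_s4 (hM.lin_mem _ hη) hidem).symm
  · rintro ⟨hR, hD⟩ φ hφ
    obtain ⟨hsup, hbot, hmono, hinj, hsurj, e, he⟩ := linmor_props (hM.lin_mem φ hφ)
    obtain ⟨c, hc⟩ := hR φ hφ
    obtain ⟨d, hd⟩ := hD φ hφ
    let j : Set.Icc (⊥ : α) c ≃o Set.Icc (linKer φ) (⊤ : α) := complIso hc
    let e' : Set.Icc (⊥ : α) c ≃o Set.Icc (⊥ : α) (φ ⊤) := j.trans e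
    have he' : ∀ a : Set.Icc (⊥ : α) c, ((e' a : Set.Icc (⊥ : α) (φ ⊤)) : α) = φ (a : α) := by
      intro a
      have h1 : (e' a : α) = φ ((a : α) ⊔ linKer φ) := he (j a)
      rw [h1, ← hsup (a : α)]
    have hmem := hcc φ hφ c (linKer φ) (φ ⊤) d hc.symm hd e' he'
    refine ⟨_, hmem, ?_⟩
    funext a
    show φ ((e'.symm ⟨(φ a ⊔ d) ⊓ φ ⊤, bot_le, inf_le_right⟩ : Set.Icc (⊥ : α) c) : α) = φ a
    have h1 : (φ a ⊔ d) ⊓ φ ⊤ = φ a := by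
      rw [sup_inf_assoc_of_le d (hmono le_top), inf_comm, hd.inf_eq_bot, sup_bot_eq]
    have h2 : (⟨(φ a ⊔ d) ⊓ φ ⊤, bot_le, inf_le_right⟩ : Set.Icc (⊥ : α) (φ ⊤)) =
        ⟨φ a, bot_le, hmono le_top⟩ := Subtype.ext h1
    rw [h2, ← he' (e'.symm ⟨φ a, bot_le, hmono le_top⟩), e'.apply_symm_apply]
end

section
/- Let L be a complete modular lattice that is compact (⊤ is a compact element of L), let G be a complete lattice, and let φ : L → G be a linear morphism. Then φ(⊤) is a compact element of G. -/
/-- If `L` is a complete compact modular lattice and `φ : L → G` is a linear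
morphism into a complete lattice `G`, then `φ ⊤` is a compact element of `G`. -/
theorem stmt_5 {α β : Type*} [CompleteLattice α] [IsModularLattice α] [CompleteLattice β]
    (hcomp : CompactLat α) (φ : α → β) (hφ : IsLinMor φ) :
    CompactElt (φ ⊤) := by
  classical
  obtain ⟨k, hk, e, he⟩ := hφ
  intro s hs hsup
  have hesymm : ∀ b : Set.Icc (⊥ : β) (φ ⊤), φ ((e.symm b : Set.Icc k (⊤ : α)) : α) = (b : β) := by
    intro b
    rw [← he (e.symm b), e.apply_symm_apply]
  have htopmem : (⊤ : α) ∈ Set.Icc k (⊤ : α) := ⟨le_top, le_rfl⟩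
  have hetop : ((e ⟨⊤, htopmem⟩ : Set.Icc (⊥ : β) (φ ⊤)) : β) = φ ⊤ := he _
  set A : Set α := (fun b : Set.Icc (⊥ : β) (φ ⊤) => ((e.symm b : Set.Icc k (⊤ : α)) : α)) ''
    (Subtype.val ⁻¹' s) with hA
  have hAtop : sSup (A ∪ {k}) = ⊤ := by
    have hkT : k ≤ sSup (A ∪ {k}) := le_sSup (Or.inr rfl)
    set xT : Set.Icc k (⊤ : α) := ⟨sSup (A ∪ {k}), hkT, le_top⟩ with hxT
    have hub : ∀ b ∈ s, b ≤ ((e xT : Set.Icc (⊥ : β) (φ ⊤)) : β) := by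
      intro b hb
      have hble : b ≤ φ ⊤ := hs b hb
      have hmem : ((e.symm ⟨b, bot_le, hble⟩ : Set.Icc k (⊤ : α)) : α) ≤ sSup (A ∪ {k}) :=
        le_sSup (Or.inl ⟨⟨b, bot_le, hble⟩, hb, rfl⟩)
      have : e.symm ⟨b, bot_le, hble⟩ ≤ xT := Subtype.coe_le_coe.mp hmem
      have := e.monotone this
      rw [e.apply_symm_apply] at this
      exact Subtype.coe_le_coe.mpr this
    have h1 : φ ⊤ ≤ ((e xT : Set.Icc (⊥ : β) (φ ⊤)) : β) :=
      hsup.symm.trans_le (sSup_le hub)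
    have h2 : ((e xT : Set.Icc (⊥ : β) (φ ⊤)) : β) = φ ⊤ :=
      le_antisymm (e xT).2.2 h1
    have : e xT = e ⟨⊤, htopmem⟩ := Subtype.ext (h2.trans hetop.symm)
    have := e.injective this
    exact congrArg Subtype.val this
  obtain ⟨t, hts, ht⟩ := hcomp (A ∪ {k}) hAtop
  set t' : Finset β := (t.image φ).filter (· ∈ s) with ht'
  refine ⟨t', fun b hb => (Finset.mem_filter.mp hb).2, ?_⟩
  have hSle : sSup (↑t' : Set β) ≤ φ ⊤ :=
    sSup_le fun b hb => hs b (Finset.mem_filter.mp hb).2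
  set S : β := sSup (↑t' : Set β) with hS
  set x : Set.Icc k (⊤ : α) := e.symm ⟨S, bot_le, hSle⟩ with hx
  have hubx : ∀ a ∈ t, a ≤ (x : α) := by
    intro a hat
    rcases hts hat with haA | hak
    · obtain ⟨b, hbs, hba⟩ := haA
      have hphia : φ a = (b : β) := by rw [← hba]; exact hesymm b
      have hbt' : (b : β) ∈ t' := by
        refine Finset.mem_filter.mpr ⟨?_, hbs⟩
        rw [← hphia]
        exact Finset.mem_image_of_mem φ hat
      have hble : (b : β) ≤ S := le_sSup hbt'
      have : b ≤ (⟨S, bot_le, hSle⟩ : Set.Icc (⊥ : β) (φ ⊤)) := hble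
      have := e.symm.monotone this
      rw [← hba]
      exact Subtype.coe_le_coe.mpr this
    · rw [Set.mem_singleton_iff] at hak
      rw [hak]
      exact x.2.1
  have hxtop : x = ⟨⊤, htopmem⟩ := by
    have : (⊤ : α) ≤ (x : α) := ht.symm.trans_le (sSup_le hubx)
    exact Subtype.ext (le_antisymm le_top this)
  have : (⟨S, bot_le, hSle⟩ : Set.Icc (⊥ : β) (φ ⊤)) = e ⟨⊤, htopmem⟩ := by
    rw [← e.apply_symm_apply ⟨S, bot_le, hSle⟩, ← hx, hxtop]
  have : S = φ ⊤ := by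
    have := congrArg Subtype.val this
    simpa [hetop] using this
  exact this
end

section
/- Let L be a complete compact modular lattice and 𝔪 a submonoid with zero of End_lin(L) that is closed under complements. The following are equivalent: (a) every compact element of L has a complement in L (L is von Neumann regular); (b) L is dual-𝔪-Rickart and every compact element of L is 𝔪-L-generated. -/
section AuxStmt6

variable {α : Type*} [CompleteLattice α]

lemma aux_proj_mem {M : Set (α → α)} (hM : IsLinSubmonoid M)
    (hcc : ClosedUnderComplements M) {x x' : α} (h : IsCompl x x') :
    proj x x' ∈ M := by
  have := hcc id hM.id_mem x x' x x' h h (OrderIso.refl _) (fun a => rfl)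
  exact this

lemma aux_key [IsModularLattice α] {M : Set (α → α)} (hM : IsLinSubmonoid M)
    (hcc : ClosedUnderComplements M) (hdr : MDualRickart M)
    {x x' : α} (h : IsCompl x x') {φ : α → α} (hφ : φ ∈ M) :
    ∃ w, IsCompl (x ⊔ φ ⊤) w := by
  have hp : proj x' x ∈ M := aux_proj_mem hM hcc h.symm
  have hψ : (proj x' x) ∘ φ ∈ M := hM.comp_mem _ hp _ hφ
  obtain ⟨z', hzz'⟩ := hdr _ hψ
  have hz : ((proj x' x) ∘ φ) ⊤ = (φ ⊤ ⊔ x) ⊓ x' := rfl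
  rw [hz] at hzz'
  set z : α := (φ ⊤ ⊔ x) ⊓ x' with hzdef
  have hzx' : z ≤ x' := inf_le_right
  have eq1 : z ⊔ x = φ ⊤ ⊔ x := by
    rw [hzdef, inf_sup_assoc_of_le x' le_sup_right, h.symm.sup_eq_top, inf_top_eq]
  have hxz : x ⊔ φ ⊤ = x ⊔ z := by
    rw [sup_comm x, sup_comm x z, eq1]
  have e3 : (x ⊔ z) ⊓ x' = z := by
    rw [inf_comm, ← inf_sup_assoc_of_le x hzx', h.symm.inf_eq_bot, bot_sup_eq]
  refine ⟨x' ⊓ z', IsCompl.of_eq ?_ ?_⟩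
  · rw [hxz, ← inf_assoc, e3, hzz'.inf_eq_bot]
  · have e2 : x' ⊓ z' ⊔ z = x' := by
      rw [inf_sup_assoc_of_le z' hzx', hzz'.symm.sup_eq_top, inf_top_eq]
    rw [hxz, sup_assoc, sup_comm z _, e2, h.sup_eq_top]

lemma aux_image_compact (hcomp : CompactLat α) {φ : α → α} (hφ : IsLinMor φ) :
    CompactElt (φ ⊤) := by
  classical
  obtain ⟨k, hk, e, he⟩ := hφ
  intro s hs hsup
  set g : α → α := fun a =>
    ((e.symm ⟨a ⊓ φ ⊤, bot_le, inf_le_right⟩ : Set.Icc k ⊤) : α) with hg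
  set hfun : α → α := fun b =>
    ((e ⟨b ⊔ k, le_sup_right, le_top⟩ : Set.Icc ⊥ (φ ⊤)) : α) with hh
  have hgmono : Monotone g := by
    intro a b hab
    exact Subtype.coe_le_coe.mpr (e.symm.monotone
      (Subtype.mk_le_mk.mpr (inf_le_inf_right _ hab)))
  have hght : ∀ a ∈ s, hfun (g a) = a := by
    intro a ha
    have h1 : a ⊓ φ ⊤ = a := inf_eq_left.mpr (hs a ha)
    have h2 : (⟨g a ⊔ k, le_sup_right, le_top⟩ : Set.Icc k ⊤)
        = e.symm ⟨a ⊓ φ ⊤, bot_le, inf_le_right⟩ := by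
      apply Subtype.ext
      simp only [hg]
      exact sup_eq_left.mpr (e.symm ⟨a ⊓ φ ⊤, bot_le, inf_le_right⟩).2.1
    simp only [hh, h2, OrderIso.apply_symm_apply, h1]
  have hhle : ∀ b, hfun b ≤ φ ⊤ := fun b =>
    (e ⟨b ⊔ k, le_sup_right, le_top⟩).2.2
  have hhk : hfun k = ⊥ := by
    have h1 : (⟨k ⊔ k, le_sup_right, le_top⟩ : Set.Icc k ⊤)
        ≤ e.symm ⟨⊥, le_refl _, bot_le⟩ := by
      rw [← Subtype.coe_le_coe]
      simpa using (e.symm ⟨⊥, le_refl _, bot_le⟩).2.1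
    have h2 := e.monotone h1
    rw [OrderIso.apply_symm_apply] at h2
    exact le_bot_iff.mp (Subtype.coe_le_coe.mpr h2)
  have hku : k ≤ sSup (insert k (g '' s)) := le_sSup (Set.mem_insert _ _)
  have hstop : sSup (insert k (g '' s)) = ⊤ := by
    set u := sSup (insert k (g '' s)) with hu
    have hv : φ ⊤ ≤ ((e ⟨u, hku, le_top⟩ : Set.Icc ⊥ (φ ⊤)) : α) := by
      have hv0 : sSup s ≤ ((e ⟨u, hku, le_top⟩ : Set.Icc ⊥ (φ ⊤)) : α) := ?_
      · rwa [hsup] at hv0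
      apply sSup_le
      intro a ha
      have h1 : g a ≤ u := le_sSup (Set.mem_insert_of_mem _ ⟨a, ha, rfl⟩)
      have h2 : e.symm ⟨a ⊓ φ ⊤, bot_le, inf_le_right⟩
          ≤ (⟨u, hku, le_top⟩ : Set.Icc k ⊤) := by
        rw [← Subtype.coe_le_coe]; exact h1
      have h3 := e.monotone h2
      rw [OrderIso.apply_symm_apply] at h3
      calc a = a ⊓ φ ⊤ := (inf_eq_left.mpr (hs a ha)).symm
        _ ≤ _ := Subtype.coe_le_coe.mpr h3
    have hv' : ((e ⟨u, hku, le_top⟩ : Set.Icc ⊥ (φ ⊤)) : α) = φ ⊤ :=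
      le_antisymm (e ⟨u, hku, le_top⟩).2.2 hv
    have h4 : (⟨u, hku, le_top⟩ : Set.Icc k ⊤) = ⟨⊤, le_top, le_top⟩ := by
      apply e.injective
      apply Subtype.ext
      rw [hv', he ⟨⊤, le_top, le_top⟩]
    exact congrArg Subtype.val h4
  obtain ⟨t, hts, htsup⟩ := hcomp _ hstop
  refine ⟨(t.image hfun).erase ⊥, ?_, ?_⟩
  · intro b hb
    rw [Finset.coe_erase, Set.mem_diff] at hb
    obtain ⟨hb1, hb2⟩ := hb
    rw [Finset.coe_image] at hb1
    obtain ⟨c, hc, rfl⟩ := hb1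
    rcases hts hc with rfl | ⟨a, ha, rfl⟩
    · exact absurd hhk (by simpa using hb2)
    · rw [hght a ha]; exact ha
  · rw [Finset.coe_erase, sSup_diff_singleton_bot]
    apply le_antisymm
    · apply sSup_le
      intro b hb
      rw [Finset.mem_coe, Finset.mem_image] at hb
      obtain ⟨c, hc, rfl⟩ := hb
      exact hhle c
    · set u2 := sSup ((t.image hfun : Finset α) : Set α) with hu2
      have hm : ∀ c ∈ (t : Set α), c ≤ g u2 := by
        intro c hc
        rcases hts hc with rfl | ⟨a, ha, rfl⟩
        · exact (e.symm ⟨u2 ⊓ φ ⊤, bot_le, inf_le_right⟩).2.1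
        · have h4 : a ≤ u2 := by
            have h5 : hfun (g a) ≤ u2 :=
              le_sSup (Finset.mem_coe.mpr (Finset.mem_image_of_mem hfun hc))
            rwa [hght a ha] at h5
          exact hgmono h4
      have h6 : g u2 = ⊤ := top_unique (htsup ▸ sSup_le hm)
      have h7 : e.symm ⟨u2 ⊓ φ ⊤, bot_le, inf_le_right⟩
          = (⟨⊤, le_top, le_top⟩ : Set.Icc k ⊤) := Subtype.ext h6
      have h8 : u2 ⊓ φ ⊤ = φ ⊤ := by
        have h9 := congrArg (fun x => ((e x : Set.Icc ⊥ (φ ⊤)) : α)) h7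
        simpa [OrderIso.apply_symm_apply, he ⟨⊤, le_top, le_top⟩] using h9
      exact inf_eq_right.mp h8

end AuxStmt6

/-- For a complete compact modular lattice `L` and a submonoid with zero
`M ⊆ End_lin(L)` closed under complements: every compact element of `L` has a complement
(von Neumann regularity) iff `L` is dual-`M`-Rickart and every compact element is
`M`-`L`-generated. -/
theorem stmt_6 {α : Type*} [CompleteLattice α] [IsModularLattice α]
    (hcomp : CompactLat α)
    (M : Set (α → α)) (hM : IsLinSubmonoid M) (hcc : ClosedUnderComplements M) :
    (∀ c : α, CompactElt c → ∃ c', IsCompl c c') ↔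
      (MDualRickart M ∧ ∀ c : α, CompactElt c → MGenerated M c) := by
  classical
  constructor
  · intro ha
    constructor
    · intro φ hφ
      exact ha _ (aux_image_compact hcomp (hM.lin_mem φ hφ))
    · intro c hc
      obtain ⟨c', hcc'⟩ := ha c hc
      refine ⟨{proj c c'}, ?_, ?_, ?_⟩
      · intro f hf
        rw [Set.mem_singleton_iff] at hf
        subst hf
        exact aux_proj_mem hM hcc hcc'
      · intro f hf x
        rw [Set.mem_singleton_iff] at hf
        subst hf
        exact inf_le_right
      · simp [proj]
  · rintro ⟨hdr, hgen⟩ c hc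
    obtain ⟨S, hSM, hSle, hSsup⟩ := hgen c hc
    have hsup : sSup ((fun f => f ⊤) '' S) = c := by
      rw [sSup_image]; exact hSsup
    have hle : ∀ a ∈ (fun f => f ⊤) '' S, a ≤ c := by
      rintro a ⟨f, hf, rfl⟩
      exact hSle f hf ⊤
    obtain ⟨t, hts, htsup⟩ := hc _ hle hsup
    have key : ∀ t' : Finset α, (∀ b ∈ t', ∃ φ ∈ M, φ ⊤ = b) →
        ∃ w, IsCompl (sSup (t' : Set α)) w := by
      intro t'
      induction t' using Finset.induction_on with
      | empty => intro _; rw [Finset.coe_empty, sSup_empty]; exact ⟨⊤, isCompl_bot_top⟩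
      | @insert a t'' ha ih =>
        intro hmem
        obtain ⟨w, hw⟩ := ih (fun b hb => hmem b (Finset.mem_insert_of_mem hb))
        obtain ⟨φ, hφ, hφa⟩ := hmem a (Finset.mem_insert_self a t'')
        obtain ⟨w', hw'⟩ := aux_key hM hcc hdr hw hφ
        rw [Finset.coe_insert, sSup_insert, sup_comm, ← hφa]
        exact ⟨w', hw'⟩
    have hmem : ∀ b ∈ t, ∃ φ ∈ M, φ ⊤ = b := by
      intro b hb
      obtain ⟨f, hf, rfl⟩ := hts hb
      exact ⟨f, hSM hf, rfl⟩
    obtain ⟨w, hw⟩ := key t hmem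
    rw [htsup] at hw
    exact ⟨w, hw⟩
end

section
/- Let L be a complete modular lattice and 𝔪 a submonoid with zero of End_lin(L) that is closed under complements, and suppose L is 𝔪-endoregular. Let ε ∈ 𝔪 be idempotent (ε ∘ ε = ε), so that ker_ε has ε(⊤) as a complement, and let π_{ker_ε}(a) = (a ⊔ ε(⊤)) ⊓ ker_ε be the projection onto ker_ε. Then ε is central in 𝔪 (ε ∘ φ = φ ∘ ε for all φ ∈ 𝔪) if and only if π_{ker_ε} ∘ φ ∘ ε = 0 for all φ ∈ 𝔪. -/
section AuxLemmas

variable {α β : Type*} [CompleteLattice α] [CompleteLattice β]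

theorem IsLinMor.monotone' {φ : α → β} (h : IsLinMor φ) : Monotone φ := by
  obtain ⟨k, h1, e, he⟩ := h
  intro x y hxy
  rw [h1 x, h1 y, ← he ⟨x ⊔ k, le_sup_right, le_top⟩, ← he ⟨y ⊔ k, le_sup_right, le_top⟩]
  exact Subtype.coe_le_coe.mpr (e.monotone (Subtype.mk_le_mk.mpr (sup_le_sup_right hxy k)))

theorem IsLinMor.map_bot' {φ : α → β} (h : IsLinMor φ) : φ ⊥ = ⊥ := by
  obtain ⟨k, h1, e, he⟩ := h
  have hb : (⊥ : β) ∈ Set.Icc (⊥ : β) (φ ⊤) := ⟨le_rfl, bot_le⟩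
  have h2 : (⟨k, le_rfl, le_top⟩ : Set.Icc k (⊤ : α)) ≤ e.symm ⟨⊥, hb⟩ :=
    Subtype.mk_le_mk.mpr (e.symm ⟨⊥, hb⟩).2.1
  have h3 := e.monotone h2
  rw [e.apply_symm_apply] at h3
  have h4 : φ k ≤ ⊥ := by
    rw [← he ⟨k, le_rfl, le_top⟩]
    exact Subtype.coe_le_coe.mpr h3
  rw [h1 ⊥, bot_sup_eq]
  exact le_bot_iff.mp h4

theorem IsLinMor.map_sup_le' {φ : α → β} (h : IsLinMor φ) (x y : α) :
    φ (x ⊔ y) ≤ φ x ⊔ φ y := by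
  have hmono := h.monotone'
  obtain ⟨k, h1, e, he⟩ := h
  have hle : φ x ⊔ φ y ∈ Set.Icc (⊥ : β) (φ ⊤) :=
    ⟨bot_le, sup_le (hmono le_top) (hmono le_top)⟩
  set s := e.symm ⟨φ x ⊔ φ y, hle⟩ with hs
  have key : ∀ z : α, φ z ≤ φ x ⊔ φ y → z ⊔ k ≤ (s : α) := by
    intro z hz
    have h2 : e ⟨z ⊔ k, le_sup_right, le_top⟩ ≤ e s := by
      rw [hs, e.apply_symm_apply]
      refine Subtype.coe_le_coe.mp ?_
      rw [he ⟨z ⊔ k, le_sup_right, le_top⟩, ← h1 z]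
      exact hz
    exact Subtype.coe_le_coe.mpr (e.le_iff_le.mp h2)
  have hxs := key x le_sup_left
  have hys := key y le_sup_right
  have hsup : (x ⊔ y) ⊔ k ≤ (s : α) := by
    rw [sup_assoc]
    exact sup_le (le_trans le_sup_left hxs) hys
  calc φ (x ⊔ y) = φ ((x ⊔ y) ⊔ k) := h1 _
    _ = (e ⟨(x ⊔ y) ⊔ k, le_sup_right, le_top⟩ : β) := (he ⟨(x ⊔ y) ⊔ k, le_sup_right, le_top⟩).symm
    _ ≤ (e s : β) := Subtype.coe_le_coe.mpr (e.monotone (Subtype.mk_le_mk.mpr hsup))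
    _ = φ x ⊔ φ y := by rw [hs, e.apply_symm_apply]

end AuxLemmas

/-- In an `M`-endoregular lattice, an idempotent `ε ∈ M` is central in `M` iff
`π_{ker_ε} ∘ φ ∘ ε = 0` for all `φ ∈ M`, where `π_{ker_ε}` is the projection onto `ker_ε`
along `ε ⊤`. -/
theorem stmt_8 {α : Type*} [CompleteLattice α] [IsModularLattice α]
    (M : Set (α → α)) (hM : IsLinSubmonoid M) (hcc : ClosedUnderComplements M)
    (hreg : MEndoregular M)
    (ε : α → α) (hε : ε ∈ M) (hidem : ε ∘ ε = ε)
    (hcompl : IsCompl (linKer ε) (ε ⊤)) :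
    (∀ φ ∈ M, ε ∘ φ = φ ∘ ε) ↔
      (∀ φ ∈ M, (proj (linKer ε) (ε ⊤)) ∘ φ ∘ ε = fun _ => (⊥ : α)) := by
  classical
  have hlin := hM.lin_mem ε hε
  have hmonoε := hlin.monotone'
  have hbotε := hlin.map_bot'
  have hsupε := hlin.map_sup_le'
  set K := linKer ε with hKdef
  obtain ⟨k', h1, e, he⟩ := hlin
  have hidem' : ∀ x, ε (ε x) = ε x := fun x => congrFun hidem x
  -- ε k' = ⊥
  have hek' : ε k' = ⊥ := by
    have hb : (⊥ : α) ∈ Set.Icc (⊥ : α) (ε ⊤) := ⟨le_rfl, bot_le⟩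
    have h2 : (⟨k', le_rfl, le_top⟩ : Set.Icc k' (⊤ : α)) ≤ e.symm ⟨⊥, hb⟩ :=
      Subtype.mk_le_mk.mpr (e.symm ⟨⊥, hb⟩).2.1
    have h3 := e.monotone h2
    rw [e.apply_symm_apply] at h3
    have h4 : ε k' ≤ ⊥ := by
      rw [← he ⟨k', le_rfl, le_top⟩]
      exact Subtype.coe_le_coe.mpr h3
    exact le_bot_iff.mp h4
  -- ε x = ⊥ → x ≤ k'
  have hker : ∀ x, ε x = ⊥ → x ≤ k' := by
    intro x hx
    have h2 : (e ⟨x ⊔ k', le_sup_right, le_top⟩ : α) = (e ⟨k', le_rfl, le_top⟩ : α) := by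
      rw [he, he, ← h1 x, hx, hek']
    have h3 : (⟨x ⊔ k', le_sup_right, le_top⟩ : Set.Icc k' (⊤ : α)) =
        ⟨k', le_rfl, le_top⟩ := e.injective (Subtype.ext h2)
    have h4 : x ⊔ k' = k' := congrArg Subtype.val h3
    exact le_sup_left.trans h4.le
  -- K = k'
  have hKk' : K = k' := by
    rw [hKdef, linKer]
    exact le_antisymm (sSup_le fun a ha => hker a ha) (le_sSup hek')
  -- ε fixes [⊥, ε ⊤]
  have hfix : ∀ y ≤ ε ⊤, ε y = y := by
    intro y hy
    set z := e.symm ⟨y, bot_le, hy⟩ with hz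
    have hz2 : (⟨(z : α) ⊔ k', le_sup_right, le_top⟩ : Set.Icc k' (⊤ : α)) = z :=
      Subtype.ext (sup_eq_left.mpr z.2.1)
    have h2 : ε (z : α) = y := by
      rw [h1 (z : α), ← he ⟨(z : α) ⊔ k', le_sup_right, le_top⟩, hz2, hz,
        e.apply_symm_apply]
    rw [← h2, hidem', h2]
  -- K ⊔ ε ⊤ = ⊤ and K ⊓ ε ⊤ = ⊥
  have hsupKε : K ⊔ ε ⊤ = ⊤ := hcompl.sup_eq_top
  have hinfKε : K ⊓ ε ⊤ = ⊥ := hcompl.inf_eq_bot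
  -- ε is the projection onto ε⊤ along K
  have hproj : ∀ a, ε a = (a ⊔ K) ⊓ ε ⊤ := by
    intro a
    have hmod : ((a ⊔ K) ⊓ ε ⊤) ⊔ K = a ⊔ K := by
      rw [inf_comm (a ⊔ K) (ε ⊤), sup_comm (ε ⊤ ⊓ (a ⊔ K)) K,
        ← sup_inf_assoc_of_le (ε ⊤) (le_sup_right : K ≤ a ⊔ K), hsupKε, top_inf_eq]
    calc ε a = ε (a ⊔ k') := h1 a
      _ = ε (a ⊔ K) := by rw [hKk']
      _ = ε (((a ⊔ K) ⊓ ε ⊤) ⊔ K) := by rw [hmod]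
      _ = ε (((a ⊔ K) ⊓ ε ⊤) ⊔ k') := by rw [hKk']
      _ = ε ((a ⊔ K) ⊓ ε ⊤) := (h1 _).symm
      _ = (a ⊔ K) ⊓ ε ⊤ := hfix _ inf_le_right
  have hεle : ∀ x, ε x ≤ ε ⊤ := fun x => by rw [hproj x]; exact inf_le_right
  have hεbot : ∀ x, x ≤ K → ε x = ⊥ := by
    intro x hx
    rw [hproj x, sup_eq_right.mpr hx]
    exact hinfKε
  have hmod2 : ∀ x : α, ((x ⊔ ε ⊤) ⊓ K) ⊔ ε ⊤ = x ⊔ ε ⊤ := by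
    intro x
    rw [inf_comm (x ⊔ ε ⊤) K, sup_comm (K ⊓ (x ⊔ ε ⊤)) (ε ⊤),
      ← sup_inf_assoc_of_le K (le_sup_right : ε ⊤ ≤ x ⊔ ε ⊤), sup_comm (ε ⊤) K,
      hsupKε, top_inf_eq]
  have hbotK : ∀ x, ε x = ⊥ → x ≤ K := fun x hx => hKk' ▸ hker x hx
  -- key iff: (x ⊔ ε⊤) ⊓ K = ⊥ ↔ x ≤ ε⊤
  have hbotiff : ∀ x : α, (x ⊔ ε ⊤) ⊓ K = ⊥ ↔ x ≤ ε ⊤ := by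
    intro x
    constructor
    · intro hx
      have h2 := hmod2 x
      rw [hx] at h2
      have h3 : x ⊔ ε ⊤ ≤ ε ⊤ := h2.ge.trans (sup_le bot_le le_rfl)
      exact le_sup_left.trans h3
    · intro hx
      rw [sup_eq_right.mpr hx, inf_comm (ε ⊤) K]
      exact hinfKε
  constructor
  · -- central → π ∘ φ ∘ ε = 0
    intro hcen φ hφ
    funext a
    show (φ (ε a) ⊔ ε ⊤) ⊓ K = ⊥
    have h2 : φ (ε a) = ε (φ a) := by
      have := congrFun (hcen φ hφ) a
      exact this.symm
    rw [h2]
    exact (hbotiff _).mpr (hεle _)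
  · -- π ∘ φ ∘ ε = 0 for all φ → ε central
    intro h φ hφ
    have hstar : ∀ ψ ∈ M, ∀ x, ψ (ε x) ≤ ε ⊤ := by
      intro ψ hψ x
      exact (hbotiff _).mp (congrFun (h ψ hψ) x)
    -- π := proj K (ε⊤) belongs to M
    set π : α → α := proj K (ε ⊤) with hπdef
    have hπ : π ∈ M := by
      have h2 := hcc id hM.id_mem K (ε ⊤) K (ε ⊤) hcompl hcompl
        (OrderIso.refl (Set.Icc (⊥ : α) K)) (fun a => rfl)
      have h3 : (fun a : α =>
          (((OrderIso.refl (Set.Icc (⊥ : α) K)).symm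
            ⟨(a ⊔ ε ⊤) ⊓ K, bot_le, inf_le_right⟩ : Set.Icc (⊥ : α) K) : α)) = π := by
        funext a; rfl
      rw [h3] at h2
      exact h2
    -- ψ := ε ∘ φ ∘ π is in M and ψ χ ψ = 0 for all χ, hence ψ = 0 by regularity
    have hψM : ε ∘ (φ ∘ π) ∈ M := hM.comp_mem ε hε (φ ∘ π) (hM.comp_mem φ hφ π hπ)
    obtain ⟨χ, hχ, hχeq⟩ := hreg (ε ∘ (φ ∘ π)) hψM
    have hεφπ : ∀ a, ε (φ (π a)) = ⊥ := by
      intro a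
      have h2 := congrFun hχeq a
      have h3 : π (χ (ε (φ (π a)))) = ⊥ := congrFun (h χ hχ) (φ (π a))
      have hφbot : φ ⊥ = ⊥ := (hM.lin_mem φ hφ).map_bot'
      calc ε (φ (π a)) = ε (φ (π (χ (ε (φ (π a)))))) := h2.symm
        _ = ε (φ ⊥) := by rw [h3]
        _ = ε ⊥ := by rw [hφbot]
        _ = ⊥ := hbotε
    have hφπK : ∀ a, φ (π a) ≤ K := fun a => hbotK _ (hεφπ a)
    have hφK : φ K ≤ K := by
      have h2 : π ⊤ = K := by
        show (⊤ ⊔ ε ⊤) ⊓ K = K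
        rw [top_sup_eq, top_inf_eq]
      have := hφπK ⊤
      rwa [h2] at this
    have hmonoφ := (hM.lin_mem φ hφ).monotone'
    have hsupφ := (hM.lin_mem φ hφ).map_sup_le'
    funext a
    show ε (φ a) = φ (ε a)
    have hfixφε : ε (φ (ε a)) = φ (ε a) := hfix _ (hstar φ hφ a)
    -- a ≤ ε a ⊔ π a
    have hdecomp : a ≤ ε a ⊔ π a := by
      have hz : (a ⊔ ε ⊤) ⊓ K ≤ a ⊔ K := le_trans inf_le_right le_sup_right
      have h2 : ε a ⊔ π a = (a ⊔ ε ⊤) ⊓ (a ⊔ K) := by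
        rw [hproj a]
        show ((a ⊔ K) ⊓ ε ⊤) ⊔ ((a ⊔ ε ⊤) ⊓ K) = _
        rw [inf_comm (a ⊔ K) (ε ⊤), sup_comm (ε ⊤ ⊓ (a ⊔ K)) ((a ⊔ ε ⊤) ⊓ K),
          ← sup_inf_assoc_of_le (ε ⊤) hz, hmod2 a]
      rw [h2]
      exact le_inf le_sup_left le_sup_left
    have hle1 : ε (φ a) ≤ φ (ε a) := by
      have h2 : φ a ≤ φ (ε a) ⊔ φ (π a) :=
        le_trans (hmonoφ hdecomp) (hsupφ _ _)
      calc ε (φ a) ≤ ε (φ (ε a) ⊔ φ (π a)) := hmonoε h2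
        _ ≤ ε (φ (ε a)) ⊔ ε (φ (π a)) := hsupε _ _
        _ = φ (ε a) ⊔ ⊥ := by rw [hfixφε, hεφπ a]
        _ = φ (ε a) := sup_bot_eq _
    have hle2 : φ (ε a) ≤ ε (φ a) := by
      have h2 : ε a ≤ a ⊔ K := by rw [hproj a]; exact inf_le_left
      have h3 : φ (ε a) ≤ φ a ⊔ φ K := le_trans (hmonoφ h2) (hsupφ _ _)
      have h4 : ε (φ K) = ⊥ := hεbot _ hφK
      calc φ (ε a) = ε (φ (ε a)) := hfixφε.symm
        _ ≤ ε (φ a ⊔ φ K) := hmonoε h3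
        _ ≤ ε (φ a) ⊔ ε (φ K) := hsupε _ _
        _ = ε (φ a) ⊔ ⊥ := by rw [h4]
        _ = ε (φ a) := sup_bot_eq _
    exact le_antisymm hle1 hle2
end

section
/- Let L be a complete modular lattice and 𝔪 a submonoid with zero of End_lin(L), and suppose L is 𝔪-abelian-endoregular. For φ ∈ 𝔪 the following are equivalent: (a) φ is injective (equivalently, ker_φ = ⊥); (b) φ is a lattice isomorphism of L; (c) φ is surjective (equivalently, φ(⊤) = ⊤). -/
private lemma isLinMor_monotone {α β : Type*} [CompleteLattice α] [CompleteLattice β]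
    {φ : α → β} (h : IsLinMor φ) : Monotone φ := by
  obtain ⟨k, hk, e, he⟩ := h
  intro x y hxy
  have h1 : φ x = ((e ⟨x ⊔ k, le_sup_right, le_top⟩ : Set.Icc (⊥:β) (φ ⊤)) : β) := by
    rw [he]; exact hk x
  have h2 : φ y = ((e ⟨y ⊔ k, le_sup_right, le_top⟩ : Set.Icc (⊥:β) (φ ⊤)) : β) := by
    rw [he]; exact hk y
  rw [h1, h2]
  exact Subtype.coe_le_coe.mpr (e.monotone (Subtype.mk_le_mk.mpr (sup_le_sup_right hxy k)))

private def mkIso {α : Type*} [CompleteLattice α] {φ ψ : α → α}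
    (hφm : Monotone φ) (hψm : Monotone ψ)
    (h1 : ∀ x, ψ (φ x) = x) (h2 : ∀ x, φ (ψ x) = x) : α ≃o α where
  toFun := φ
  invFun := ψ
  left_inv := h1
  right_inv := h2
  map_rel_iff' := by
    intro a b
    constructor
    · intro h
      have := hψm h
      simpa only [Equiv.coe_fn_mk, h1] using this
    · exact fun h => hφm h

/-- In an `M`-abelian-endoregular lattice, a member `φ ∈ M` is injective iff
it is a lattice isomorphism of `L` iff it is surjective. -/
theorem stmt_12 {α : Type*} [CompleteLattice α] [IsModularLattice α]
    (M : Set (α → α)) (hM : IsLinSubmonoid M)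
    (hab : MAbelian M) (hreg : MEndoregular M)
    (φ : α → α) (hφ : φ ∈ M) :
    (Function.Injective φ ↔ ∃ e : α ≃o α, ∀ x, e x = φ x) ∧
    (Function.Surjective φ ↔ ∃ e : α ≃o α, ∀ x, e x = φ x) := by
  obtain ⟨ψ, hψ, hpsi⟩ := hreg φ hφ
  have hφm := isLinMor_monotone (hM.lin_mem φ hφ)
  have hψm := isLinMor_monotone (hM.lin_mem ψ hψ)
  have hpt : ∀ x, φ (ψ (φ x)) = φ x := fun x => congrFun hpsi x
  -- idempotents
  have hεM : ψ ∘ φ ∈ M := hM.comp_mem ψ hψ φ hφ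
  have hηM : φ ∘ ψ ∈ M := hM.comp_mem φ hφ ψ hψ
  have hεid : (ψ ∘ φ) ∘ (ψ ∘ φ) = ψ ∘ φ := by
    funext x; simp only [Function.comp_apply, hpt]
  have hηid : (φ ∘ ψ) ∘ (φ ∘ ψ) = φ ∘ ψ := by
    funext x; simp only [Function.comp_apply, hpt]
  have hεc := hab (ψ ∘ φ) hεM hεid φ hφ
  have hηc := hab (φ ∘ ψ) hηM hηid φ hφ
  have hεc' : ∀ x, ψ (φ (φ x)) = φ (ψ (φ x)) := fun x => congrFun hεc x
  have hηc' : ∀ x, φ (ψ (φ x)) = φ (φ (ψ x)) := fun x => congrFun hηc x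
  constructor
  · constructor
    · intro hinj
      have h1 : ∀ x, ψ (φ x) = x := fun x => hinj (hpt x)
      have h2 : ∀ x, φ (ψ x) = x := by
        intro x
        apply hinj
        rw [← hηc' x, hpt]
      exact ⟨mkIso hφm hψm h1 h2, fun _ => rfl⟩
    · rintro ⟨e, he⟩
      intro a b hab'
      have : e a = e b := by rw [he, he]; exact hab'
      exact e.injective this
  · constructor
    · intro hsurj
      have h2 : ∀ x, φ (ψ x) = x := by
        intro x
        obtain ⟨y, rfl⟩ := hsurj x
        exact hpt y
      have h1 : ∀ x, ψ (φ x) = x := by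
        intro x
        obtain ⟨y, rfl⟩ := hsurj x
        rw [hεc' y, hpt]
      exact ⟨mkIso hφm hψm h1 h2, fun _ => rfl⟩
    · rintro ⟨e, he⟩
      intro b
      exact ⟨e.symm b, by rw [← he]; exact e.apply_symm_apply b⟩
end

section
/- Let R be a ring and M a left R-module such that End_R(M) is a von Neumann regular ring in which every idempotent is central (M is abelian endoregular). Then M is Hopfian and cohopfian: every injective endomorphism of M is an automorphism, and every surjective endomorphism of M is an automorphism. -/
/-- If `End_R(M)` is a von Neumann regular ring whose idempotents are all
central (i.e. `M` is abelian endoregular), then `M` is Hopfian and cohopfian. -/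
theorem stmt_13 {R M : Type*} [Ring R] [AddCommGroup M] [Module R M]
    (hreg : ∀ f : M →ₗ[R] M, ∃ g : M →ₗ[R] M, f ∘ₗ g ∘ₗ f = f)
    (hab : ∀ e : M →ₗ[R] M, e ∘ₗ e = e → ∀ f : M →ₗ[R] M, e ∘ₗ f = f ∘ₗ e) :
    (∀ f : M →ₗ[R] M, Function.Injective f → Function.Bijective f) ∧
    (∀ f : M →ₗ[R] M, Function.Surjective f → Function.Bijective f) := by
  constructor
  · intro f hinj
    obtain ⟨g, hg⟩ := hreg f
    have hidem : (f ∘ₗ g) ∘ₗ (f ∘ₗ g) = f ∘ₗ g := by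
      ext x
      simpa [LinearMap.comp_apply] using LinearMap.congr_fun hg (g x)
    have hc := hab (f ∘ₗ g) hidem f
    refine ⟨hinj, fun y => ?_⟩
    -- (f∘g)∘f = f, so f∘(f∘g) = f, injectivity gives f(g y) = y... need care
    have h1 : (f ∘ₗ g) ∘ₗ f = f := by
      ext x; simpa [LinearMap.comp_apply] using LinearMap.congr_fun hg x
    have h2 : f ∘ₗ (f ∘ₗ g) = f := hc ▸ h1
    have := LinearMap.congr_fun h2 y
    exact ⟨g y, hinj (by simpa [LinearMap.comp_apply] using this)⟩
  · intro f hsurj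
    obtain ⟨g, hg⟩ := hreg f
    have hidem : (g ∘ₗ f) ∘ₗ (g ∘ₗ f) = g ∘ₗ f := by
      ext x
      have := LinearMap.congr_fun hg x
      simpa [LinearMap.comp_apply] using congrArg g this
    have hc := hab (g ∘ₗ f) hidem f
    have h1 : f ∘ₗ (g ∘ₗ f) = f := by
      ext x; simpa [LinearMap.comp_apply] using LinearMap.congr_fun hg x
    have h2 : (g ∘ₗ f) ∘ₗ f = f := hc.trans h1
    refine ⟨fun a b hab' => ?_, hsurj⟩
    obtain ⟨a', ha⟩ := hsurj a
    obtain ⟨b', hb⟩ := hsurj b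
    have ha2 := LinearMap.congr_fun h2 a'
    have hb2 := LinearMap.congr_fun h2 b'
    simp only [LinearMap.comp_apply] at ha2 hb2
    rw [ha] at ha2; rw [hb] at hb2
    calc a = g (f a) := ha2.symm
    _ = g (f b) := by rw [hab']
    _ = b := hb2
end

section
/- Let L be an upper-continuous complete modular lattice and let {a_i}_{i∈I} be an independent family of elements of L with ⨆_{i∈I} a_i = ⊤. Suppose each a_i decomposes as a_i = b_i ⊔ c_i with b_i ⊓ c_i = ⊥. Then ⨆_{i∈I} b_i is a complement of ⨆_{i∈I} c_i in L, i.e., (⨆ b_i) ⊓ (⨆ c_i) = ⊥ and (⨆ b_i) ⊔ (⨆ c_i) = ⊤. -/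
/-- In an upper-continuous complete modular lattice, if `{a i}` is an
independent family joining to `⊤` and each `a i = b i ⊔ c i` with `b i ⊓ c i = ⊥`, then
`⨆ b i` is a complement of `⨆ c i`. -/
theorem stmt_14 {α ι : Type*} [CompleteLattice α] [IsModularLattice α]
    (hUC : ∀ a : α, ∀ D : Set α, DirectedOn (· ≤ ·) D → a ⊓ sSup D = ⨆ d ∈ D, a ⊓ d)
    (a b c : ι → α)
    (hind : ∀ j, a j ⊓ (⨆ i, ⨆ (_ : i ≠ j), a i) = ⊥)
    (htop : ⨆ i, a i = ⊤)
    (hdecsup : ∀ i, b i ⊔ c i = a i) (hdecinf : ∀ i, b i ⊓ c i = ⊥) :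
    (⨆ i, b i) ⊓ (⨆ i, c i) = ⊥ ∧ (⨆ i, b i) ⊔ (⨆ i, c i) = ⊤ := by
  classical
  have hba : ∀ i, b i ≤ a i := fun i => (hdecsup i) ▸ le_sup_left
  have hca : ∀ i, c i ≤ a i := fun i => (hdecsup i) ▸ le_sup_right
  -- Finite case by induction
  have hfin : ∀ s : Finset ι, Disjoint (s.sup b) (s.sup c) := by
    intro s
    induction s using Finset.cons_induction with
    | empty => simp
    | cons j s hj ih =>
      rw [Finset.sup_cons, Finset.sup_cons]
      have hA : Disjoint (a j) (s.sup a) := by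
        rw [disjoint_iff]
        refine le_bot_iff.mp ?_
        calc a j ⊓ s.sup a ≤ a j ⊓ (⨆ i, ⨆ (_ : i ≠ j), a i) := by
              refine inf_le_inf_left _ (Finset.sup_le fun i hi => ?_)
              exact le_iSup₂ (f := fun i (_ : i ≠ j) => a i) i
                (fun h => hj (h ▸ hi))
          _ = ⊥ := hind j
      have hBA : s.sup b ≤ s.sup a := Finset.sup_mono_fun fun i _ => hba i
      have hCA : s.sup c ≤ s.sup a := Finset.sup_mono_fun fun i _ => hca i
      have hbc : Disjoint (b j) (c j) := disjoint_iff.mpr (hdecinf j)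
      have hajBC : Disjoint (a j) (s.sup b ⊔ s.sup c) :=
        hA.mono_right (sup_le hBA hCA)
      have h1 : Disjoint (b j) (c j ⊔ (s.sup b ⊔ s.sup c)) :=
        hbc.disjoint_sup_right_of_disjoint_sup_left (by rw [hdecsup j]; exact hajBC)
      have hBZ : Disjoint (s.sup b) (s.sup c ⊔ c j) :=
        ih.disjoint_sup_right_of_disjoint_sup_left
          (hA.symm.mono (sup_le hBA hCA) (hca j))
      have h2 : Disjoint (s.sup c ⊔ c j) (s.sup b ⊔ b j) := by
        refine hBZ.symm.disjoint_sup_right_of_disjoint_sup_left ?_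
        refine (h1.symm.mono_left ?_)
        exact sup_le (sup_le (le_sup_of_le_right le_sup_right) le_sup_left)
          (le_sup_of_le_right le_sup_left)
      exact (h2.symm.mono (sup_comm (b j) (s.sup b)).le
        (sup_comm (c j) (s.sup c)).le)
  -- directed sets of finite subjoins
  have hdir : ∀ f : ι → α, DirectedOn (· ≤ ·) (Set.range fun s : Finset ι => s.sup f) := by
    intro f x ⟨s, hs⟩ y ⟨t, ht⟩
    exact ⟨(s ∪ t).sup f, ⟨s ∪ t, rfl⟩, hs ▸ Finset.sup_mono Finset.subset_union_left,
      ht ▸ Finset.sup_mono Finset.subset_union_right⟩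
  have hsSup : ∀ f : ι → α, sSup (Set.range fun s : Finset ι => s.sup f) = ⨆ i, f i := by
    intro f
    apply le_antisymm
    · refine sSup_le ?_
      rintro x ⟨s, rfl⟩
      exact Finset.sup_le fun i _ => le_iSup f i
    · refine iSup_le fun i => le_sSup ?_
      exact ⟨{i}, by simp⟩
  constructor
  · rw [← hsSup c, hUC _ _ (hdir c)]
    refine le_bot_iff.mp (iSup₂_le ?_)
    rintro x ⟨t, rfl⟩
    rw [inf_comm, ← hsSup b, hUC _ _ (hdir b)]
    refine iSup₂_le ?_
    rintro y ⟨s, rfl⟩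
    calc t.sup c ⊓ s.sup b ≤ (s ∪ t).sup c ⊓ (s ∪ t).sup b :=
          inf_le_inf (Finset.sup_mono Finset.subset_union_right)
            (Finset.sup_mono Finset.subset_union_left)
      _ = ⊥ := disjoint_iff.mp (hfin (s ∪ t)).symm
  · rw [← htop]
    refine le_antisymm (sup_le (iSup_mono hba) (iSup_mono hca)) (iSup_le fun i => ?_)
    rw [← hdecsup i]
    exact sup_le (le_sup_of_le_left (le_iSup b i)) (le_sup_of_le_right (le_iSup c i))
end
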